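/- (Exactness core of Theorem 2.) Let n ≥ 1 and s ≥ 1 be integers and for each integer j ≥ 0 let w_j ∈ ℝ^{n+1} be the vector with entries (w_j)_v = (v/n)^j, v = 0,…,n. Let H and Q be real (n+1)×(n+1) matrices such that: (i) H is symmetric and w_i^T H w_k = 1/(i+k+1) for all integers i, k ≥ 0 with i+k ≤ 2s−1; (ii) Q + Q^T = B, where B is the diagonal matrix diag(−1, 0, …, 0, 1); (iii) Q w_0 = 0 and Q w_j = j H w_{j−1} for every j = 1,…,s (i.e., the operator H^{−1}Q differentiates polynomials of degree at most s exactly at all nodes). Then w_i^T Q w_j = j/(i+j) for all integers i, j ≥ 0 with 1 ≤ i+j ≤ 2s, i.e., the bilinear form z^T Q u is exact for the integral ∫_0^1 x^i · (d/dx) x^j dx on all monomial pairs of total degree at most 2s. -/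

import Mathlib

open Matrix
/-- exactness core of Theorem 2: let `w_j` be the monomial grid
vectors `(w_j)_v = (v/n)^j`. If (i) the `H` inner product integrates monomial
pairs of total degree at most `2s−1` exactly, (ii) `Q + Qᵀ = diag(−1,0,…,0,1)`,
and (iii) `Q w_0 = 0` and `Q w_j = j H w_{j−1}` for `j = 1, …, s`, then
`w_iᵀ Q w_j = j/(i+j)` whenever `1 ≤ i+j ≤ 2s`. -/
theorem sbp_bilinear_form_exact_on_monomials (n s : ℕ) (hn : 1 ≤ n) (hs : 1 ≤ s)
    (H Q : Matrix (Fin (n + 1)) (Fin (n + 1)) ℝ)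
    (w : ℕ → Fin (n + 1) → ℝ)
    (hw : ∀ (j : ℕ) (v : Fin (n + 1)), w j v = (((v : ℕ) : ℝ) / (n : ℝ)) ^ j)
    (hHsym : H.IsSymm)
    (hHquad : ∀ i k : ℕ, i + k ≤ 2 * s - 1 →
      w i ⬝ᵥ H.mulVec (w k) = 1 / ((i : ℝ) + (k : ℝ) + 1))
    (hQ : Q + Qᵀ = Matrix.diagonal (fun v : Fin (n + 1) =>
      if v = 0 then (-1 : ℝ) else if v = Fin.last n then 1 else 0))
    (hQ0 : Q.mulVec (w 0) = 0)
    (hQw : ∀ j : ℕ, 1 ≤ j → j ≤ s →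
      Q.mulVec (w j) = (j : ℝ) • H.mulVec (w (j - 1))) :
    ∀ i j : ℕ, 1 ≤ i + j → i + j ≤ 2 * s →
      w i ⬝ᵥ Q.mulVec (w j) = (j : ℝ) / ((i : ℝ) + (j : ℝ)) := by
  have hn0 : (n : ℝ) ≠ 0 := Nat.cast_ne_zero.mpr (by omega)
  -- values at the endpoints
  have hlast : ∀ j : ℕ, w j (Fin.last n) = 1 := by
    intro j
    rw [hw, Fin.val_last, div_self hn0, one_pow]
  have hzero : ∀ j : ℕ, 1 ≤ j → w j 0 = 0 := by
    intro j hj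
    rw [hw]
    simp [zero_pow (by omega : j ≠ 0)]
  have hlast_ne : Fin.last n ≠ (0 : Fin (n + 1)) := by
    simp [Fin.ext_iff]; omega
  -- core case: 1 ≤ j ≤ s
  have core : ∀ i j : ℕ, 1 ≤ j → j ≤ s → i + j ≤ 2 * s →
      w i ⬝ᵥ Q.mulVec (w j) = (j : ℝ) / ((i : ℝ) + (j : ℝ)) := by
    intro i j hj1 hj2 hij
    rw [hQw j hj1 hj2, dotProduct_smul, hHquad i (j - 1) (by omega)]
    have hc : ((j - 1 : ℕ) : ℝ) = (j : ℝ) - 1 := by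
      push_cast [Nat.cast_sub hj1]; ring
    have hne : (i : ℝ) + (j : ℝ) ≠ 0 := by
      have : (0 : ℝ) < (i : ℝ) + (j : ℝ) := by
        have : (0 : ℝ) < (j : ℝ) := by exact_mod_cast hj1
        positivity
      linarith
    rw [hc, smul_eq_mul]
    have harith : (i:ℝ) + ((j:ℝ) - 1) + 1 = (i:ℝ) + (j:ℝ) := by ring
    rw [harith, mul_one_div]
  -- the boundary bilinear form
  have hB : ∀ i j : ℕ,
      w i ⬝ᵥ (Matrix.diagonal (fun v : Fin (n + 1) =>
        if v = 0 then (-1 : ℝ) else if v = Fin.last n then 1 else 0)).mulVec (w j)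
        = w i (Fin.last n) * w j (Fin.last n) - w i 0 * w j 0 := by
    intro i j
    have : ∀ v : Fin (n + 1),
        w i v * ((if v = 0 then (-1 : ℝ) else if v = Fin.last n then 1 else 0) * w j v)
        = (if v = Fin.last n then w i v * w j v else 0)
          + (if v = 0 then -(w i v * w j v) else 0) := by
      intro v
      by_cases h0 : v = 0
      · subst h0
        simp [hlast_ne.symm]
      · by_cases hl : v = Fin.last n
        · subst hl
          simp [hlast_ne]
        · simp [h0, hl]
    simp only [dotProduct, Matrix.mulVec_diagonal]
    rw [Finset.sum_congr rfl (fun v _ => this v), Finset.sum_add_distrib,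
      Finset.sum_ite_eq' Finset.univ (Fin.last n) (fun v => w i v * w j v),
      Finset.sum_ite_eq' Finset.univ (0 : Fin (n + 1)) (fun v => -(w i v * w j v))]
    simp
    ring
  -- transpose identity
  have key : ∀ i j : ℕ,
      w i ⬝ᵥ Q.mulVec (w j) + w j ⬝ᵥ Q.mulVec (w i)
        = w i (Fin.last n) * w j (Fin.last n) - w i 0 * w j 0 := by
    intro i j
    have h := congrArg (fun M => w i ⬝ᵥ M.mulVec (w j)) hQ
    simp only [Matrix.add_mulVec, dotProduct_add, Matrix.mulVec_transpose] at h
    have h2 : w i ⬝ᵥ w j ᵥ* Q = w j ⬝ᵥ Q.mulVec (w i) := by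
      rw [dotProduct_comm, ← Matrix.dotProduct_mulVec]
    rw [h2] at h
    rw [← hB i j, ← h]
  intro i j h1 h2
  rcases Nat.eq_zero_or_pos j with hj0 | hj1
  · subst hj0
    rw [hQ0, dotProduct_zero]
    simp
  rcases le_or_gt j s with hjs | hjs
  · exact core i j hj1 hjs h2
  · -- j > s, hence i < s
    have his : i ≤ s := by omega
    have hkey := key i j
    rw [hlast, hlast, hzero j hj1, one_mul, mul_zero, sub_zero] at hkey
    rcases Nat.eq_zero_or_pos i with hi0 | hi1
    · subst hi0
      rw [hQ0, dotProduct_zero, add_zero] at hkey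
      rw [hkey]
      have : (j : ℝ) ≠ 0 := Nat.cast_ne_zero.mpr (by omega)
      field_simp
      simp
    · have hcore := core j i hi1 his (by omega)
      have hne : (i : ℝ) + (j : ℝ) ≠ 0 := by
        have : (0 : ℝ) < (j : ℝ) := by exact_mod_cast hj1
        have : (0 : ℝ) ≤ (i : ℝ) := Nat.cast_nonneg i
        positivity
      rw [hcore] at hkey
      have hfin : (j : ℝ) / ((i : ℝ) + (j : ℝ)) = 1 - (i : ℝ) / ((j : ℝ) + (i : ℝ)) := by
        rw [add_comm (j:ℝ) (i:ℝ)]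
        field_simp
        ring
      rw [hfin]
      linarith
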